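/- Let K be a field of characteristic ≠ 2 and δ ∈ K nonzero. There exist X, Y ∈ K with Y ≠ 0 and Y² = X³ - δ²X if and only if there exist a, b, c ∈ K with a² + b² = c² and (1/2)ab = δ. -/

import Mathlib

theorem congruent_number_iff (K : Type*) [Field K] (h2 : (2 : K) ≠ 0)
    (δ : K) (hδ : δ ≠ 0) :
    (∃ X Y : K, Y ≠ 0 ∧ Y ^ 2 = X ^ 3 - δ ^ 2 * X) ↔
      (∃ a b c : K, a ^ 2 + b ^ 2 = c ^ 2 ∧ (1 / 2) * a * b = δ) := by
  constructor
  · rintro ⟨X, Y, hY, hE⟩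
    refine ⟨(X ^ 2 - δ ^ 2) / Y, 2 * δ * X / Y, (X ^ 2 + δ ^ 2) / Y, ?_, ?_⟩
    · field_simp
      ring
    · field_simp
      linear_combination (-1 : K) * hE
  · rintro ⟨a, b, c, hpy, hab⟩
    have hb : b ≠ 0 := by
      intro h; apply hδ; rw [← hab, h]; ring
    have hab2 : a * b = 2 * δ := by
      field_simp at hab
      linear_combination hab
    have hac : a + c ≠ 0 := by
      intro h
      have hc : c = -a := by linear_combination h
      apply hb
      have hb2 : b ^ 2 = 0 := by
        rw [hc] at hpy
        linear_combination hpy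
      exact pow_eq_zero_iff (n := 2) (by norm_num) |>.mp hb2
    refine ⟨δ * (a + c) / b, 2 * δ ^ 2 * (a + c) / b ^ 2, ?_, ?_⟩
    · apply div_ne_zero _ (pow_ne_zero _ hb)
      exact mul_ne_zero (mul_ne_zero h2 (pow_ne_zero _ hδ)) hac
    · have h4 : ((b : K) ^ 2) ^ 2 ≠ 0 := pow_ne_zero _ (pow_ne_zero _ hb)
      rw [div_pow, div_pow, div_eq_iff h4]
      have expand : ((δ * (a + c)) ^ 3 / b ^ 3 - δ ^ 2 * (δ * (a + c) / b)) * (b ^ 2) ^ 2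
          = (δ * (a + c)) ^ 3 * b - δ ^ 3 * (a + c) * b ^ 3 := by
        field_simp
      rw [expand]
      linear_combination (δ ^ 3 * (a + c) * b) * hpy + (-(2 * δ ^ 3 * (a + c) ^ 2)) * hab2
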